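/- arXiv:2111.07654 — 2 statements merged into one kernel-verified Lean document; each statement's English description precedes it below -/
import Mathlib

section
/- Let T ⊆ 2^{<ω} be a Silver tree and let f : 2^ω × ω^ω → 2^ω be a Borel map. Then there exist a Silver tree S ⊆ T and a dense G_δ set D ⊆ ω^ω such that the restriction of f to [S] × D is continuous. -/
open Set

/-- The word `u₀⌢i₀⌢u₁⌢i₁⌢…⌢u_n⌢i_n` built from the defining tuples `u`
and the choice of bits `i`. -/
def silverWord (u : ℕ → List Bool) (i : ℕ → Bool) : ℕ → List Bool
  | 0 => u 0 ++ [i 0]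
  | n + 1 => silverWord u i n ++ (u (n + 1) ++ [i (n + 1)])

/-- `T ⊆ 2^{<ω}` is the Silver tree with defining tuples `u`: it consists of all
tuples `u₀⌢i₀⌢…⌢u_n⌢i_n` together with all their initial segments. -/
def IsSilver (T : Set (List Bool)) (u : ℕ → List Bool) : Prop :=
  T = { s | ∃ (n : ℕ) (i : ℕ → Bool), s <+: silverWord u i n }

/-- `T` is a Silver tree. -/
def SilverTree (T : Set (List Bool)) : Prop :=
  ∃ u, IsSilver T u

/-- The portion `T↾u = {s ∈ T : u ⊆ s or s ⊆ u}`. -/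
def portion (T : Set (List Bool)) (u : List Bool) : Set (List Bool) :=
  { s ∈ T | u <+: s ∨ s <+: u }

/-- The shift `σ⊕v` of a tuple `v` by a tuple `σ` (coordinatewise mod-2 sum,
with `σ` padded by `0` or truncated to the length of `v`). -/
def shiftT (σ v : List Bool) : List Bool :=
  List.ofFn fun i : Fin v.length => xor (v.get i) (σ.getD i.1 false)

/-- The shift `σ⊕T` of a set of tuples. -/
def shiftTree (σ : List Bool) (T : Set (List Bool)) : Set (List Bool) :=
  shiftT σ '' T

/-- The shift `σ⊕a` of a point of Cantor space. -/
def shiftR (σ : List Bool) (a : ℕ → Bool) : ℕ → Bool :=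
  fun i => xor (a i) (σ.getD i false)

/-- The restriction `a↾n ∈ 2^{<ω}` of `a ∈ 2^ω`. -/
def restrictReal (a : ℕ → Bool) (n : ℕ) : List Bool :=
  List.ofFn fun i : Fin n => a i.1

/-- `[T]`, the set of branches of `T`. -/
def branches (T : Set (List Bool)) : Set (ℕ → Bool) :=
  { a | ∀ n, restrictReal a n ∈ T }

/-- The splitting levels `oi_T(n) = |u₀|+1+…+|u_{n-1}|+1+|u_n|` computed
from the defining tuples `u`. -/
def oi (u : ℕ → List Bool) (n : ℕ) : ℕ :=
  (∑ k ∈ Finset.range (n + 1), (u k).length) + n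

/-- `S ⊑ₙ T` : `S ⊆ T` and the first `n` splitting levels agree. -/
def RefinesN (S T : Set (List Bool)) (n : ℕ) : Prop :=
  S ⊆ T ∧ ∀ uS uT : ℕ → List Bool, IsSilver S uS → IsSilver T uT →
    ∀ k < n, oi uS k = oi uT k

/-- `S` is clopen in `T` : `S` is a finite union of portions of `T`. -/
def ClopenIn (S T : Set (List Bool)) : Prop :=
  ∃ F : Finset (List Bool), ↑F ⊆ T ∧ S = ⋃ u ∈ F, portion T u

/-- The Baire interval `B_v = {x ∈ ω^ω : v ⊂ x}`. -/
def baire (v : List ℕ) : Set (ℕ → ℕ) :=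
  { x | ∀ i : Fin v.length, x i.1 = v.get i }

/-- `s ∈ 2^{<ω}` is an initial segment of `a ∈ 2^ω`. -/
def prefixOfReal (s : List Bool) (a : ℕ → Bool) : Prop :=
  ∀ i : Fin s.length, a i.1 = s.get i

open Topology Filter in
theorem polishBaire (α : Type*) [TopologicalSpace α] [PolishSpace α] : BaireSpace α := by
  letI := TopologicalSpace.upgradeIsCompletelyMetrizable α
  exact inferInstance

open Topology Filter

namespace Stmt8

variable {u : ℕ → List Bool}

/-- blocks `u p ++ [i p]` for `p ∈ [a, b)`, concatenated. -/
def mid (u : ℕ → List Bool) (i : ℕ → Bool) (a b : ℕ) : List Bool :=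
  ((List.range (b - a)).map (fun t => u (a + t) ++ [i (a + t)])).flatten

def full (u : ℕ → List Bool) (i : ℕ → Bool) (n : ℕ) : List Bool :=
  mid u i 0 (n + 1)

lemma mid_single (i : ℕ → Bool) (a : ℕ) : mid u i a (a + 1) = u a ++ [i a] := by
  simp [mid, List.range_succ]

lemma mid_append (i : ℕ → Bool) {a b c : ℕ} (hab : a ≤ b) (hbc : b ≤ c) :
    mid u i a c = mid u i a b ++ mid u i b c := by
  have h : c - a = (b - a) + (c - b) := by omega
  rw [mid, h, List.range_add, List.map_append, List.flatten_append]
  have h2 : (List.map (fun t => u (a + t) ++ [i (a + t)])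
      (List.map (fun x => b - a + x) (List.range (c - b)))).flatten = mid u i b c := by
    rw [mid, List.map_map]
    congr 1
    apply List.map_congr_left
    intro t _
    simp only [Function.comp_apply]
    have h3 : a + (b - a + t) = b + t := by omega
    rw [h3]
  rw [h2]
  rfl

lemma mid_congr {i j : ℕ → Bool} {a b : ℕ} (h : ∀ p, a ≤ p → p < b → i p = j p) :
    mid u i a b = mid u j a b := by
  rw [mid, mid]
  congr 1
  apply List.map_congr_left
  intro t ht
  simp only [List.mem_range] at ht
  rw [h (a + t) (by omega) (by omega)]

lemma silverWord_eq_full (i : ℕ → Bool) (n : ℕ) : silverWord u i n = full u i n := by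
  induction n with
  | zero => simp [silverWord, full, mid, List.range_succ]
  | succ n ih =>
      rw [silverWord, ih, full, full, mid_append i (by omega : 0 ≤ n + 1) (by omega : n + 1 ≤ n + 2),
        mid_single]

lemma full_succ (i : ℕ → Bool) (n : ℕ) :
    full u i (n + 1) = full u i n ++ (u (n + 1) ++ [i (n + 1)]) := by
  rw [← silverWord_eq_full, ← silverWord_eq_full]; rfl

lemma full_congr {i j : ℕ → Bool} {n : ℕ} (h : ∀ p ≤ n, i p = j p) :
    full u i n = full u j n :=
  mid_congr fun p _ hp => h p (by omega)

lemma full_prefix (i : ℕ → Bool) {n m : ℕ} (h : n ≤ m) : full u i n <+: full u i m := by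
  rw [full, full, mid_append i (by omega : 0 ≤ n + 1) (by omega : n + 1 ≤ m + 1)]
  exact List.prefix_append _ _

lemma length_mid (i j : ℕ → Bool) (a b : ℕ) : (mid u i a b).length = (mid u j a b).length := by
  rw [mid, mid, List.length_flatten, List.length_flatten, List.map_map, List.map_map]
  congr 1
  apply List.map_congr_left
  intro t _
  simp

lemma length_full (i j : ℕ → Bool) (n : ℕ) : (full u i n).length = (full u j n).length :=
  length_mid i j 0 (n + 1)

lemma length_mid_ge (i : ℕ → Bool) (a b : ℕ) : b - a ≤ (mid u i a b).length := by
  rw [mid, List.length_flatten, List.map_map]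
  calc b - a = ((List.range (b - a)).map fun _ => 1).sum := by
        rw [List.map_const', List.sum_replicate, List.length_range]; simp
    _ ≤ _ := by
        apply List.sum_le_sum
        intro t _
        simp

lemma length_full_ge (i : ℕ → Bool) (n : ℕ) : n + 1 ≤ (full u i n).length := by
  have := length_mid_ge (u := u) i 0 (n + 1)
  simpa [full] using this

lemma length_full_lt (i : ℕ → Bool) {n m : ℕ} (h : n < m) :
    (full u i n).length < (full u i m).length := by
  have h1 : full u i m = full u i n ++ mid u i (n + 1) (m + 1) :=
    mid_append i (by omega) (by omega)
  rw [h1, List.length_append]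
  have := length_mid_ge (u := u) i (n + 1) (m + 1)
  omega

lemma full_inj_bits {i j : ℕ → Bool} {n : ℕ} (h : full u i n = full u j n) :
    ∀ p ≤ n, i p = j p := by
  induction n with
  | zero =>
      intro p hp
      interval_cases p
      have : full u i 0 = u 0 ++ [i 0] := by rw [← silverWord_eq_full]; rfl
      have h2 : full u j 0 = u 0 ++ [j 0] := by rw [← silverWord_eq_full]; rfl
      rw [this, h2] at h
      simpa using List.append_inj_right h rfl
  | succ n ih =>
      intro p hp
      rw [full_succ, full_succ] at h
      have hlen : (full u i n).length = (full u j n).length := length_full i j n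
      obtain ⟨h1, h2⟩ := List.append_inj h hlen
      rcases Nat.lt_succ_iff_lt_or_eq.mp (Nat.lt_succ_of_le hp) with hp' | hp'
      · exact ih h1 p (by omega)
      · subst hp'
        simpa using List.append_inj_right h2 rfl

lemma eq_of_prefix_prefix {s t l : List Bool} (hs : s <+: l) (ht : t <+: l)
    (h : s.length = t.length) : s = t := by
  rw [List.prefix_iff_eq_take.mp hs, List.prefix_iff_eq_take.mp ht, h]



/-- basic clopen set in Cantor space -/
def NB (t : List Bool) : Set (ℕ → Bool) := { a | prefixOfReal t a }

lemma mem_NB {t : List Bool} {a : ℕ → Bool} :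
    a ∈ NB t ↔ ∀ k (h : k < t.length), a k = t.get ⟨k, h⟩ :=
  ⟨fun h k hk => h ⟨k, hk⟩, fun h i => h i.1 i.2⟩

lemma length_restrictReal (a : ℕ → Bool) (n : ℕ) : (restrictReal a n).length = n := by
  simp [restrictReal]

lemma get_restrictReal (a : ℕ → Bool) (n k : ℕ) (h : k < (restrictReal a n).length) :
    (restrictReal a n).get ⟨k, h⟩ = a k := by
  simp [restrictReal]

lemma mem_NB_restrictReal (a : ℕ → Bool) (n : ℕ) : a ∈ NB (restrictReal a n) := by
  rw [mem_NB]
  intro k hk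
  rw [get_restrictReal]

/-- a real is in `NB t` iff its restriction to `|t|` is `t`. -/
lemma restrictReal_eq_of_mem_NB {t : List Bool} {a : ℕ → Bool} (h : a ∈ NB t) :
    restrictReal a t.length = t := by
  apply List.ext_get (by simp [length_restrictReal])
  intro k h1 h2
  rw [get_restrictReal]
  exact (mem_NB.mp h) k h2

lemma NB_anti {s t : List Bool} (h : s <+: t) : NB t ⊆ NB s := by
  intro a ha
  rw [mem_NB] at ha ⊢
  intro k hk
  have hk2 : k < t.length := lt_of_lt_of_le hk h.length_le
  rw [ha k hk2]
  have := h.getElem (i := k) hk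
  simp only [List.get_eq_getElem]
  exact this.symm

lemma restrictReal_prefix (a : ℕ → Bool) {n m : ℕ} (h : n ≤ m) :
    restrictReal a n <+: restrictReal a m := by
  have : restrictReal a n = (restrictReal a m).take n := by
    apply List.ext_get (by simp [length_restrictReal]; omega)
    intro k h1 h2
    rw [get_restrictReal]
    rw [show ((restrictReal a m).take n).get ⟨k, h2⟩ = (restrictReal a m).get ⟨k, by simp [length_restrictReal] at h2 ⊢; omega⟩ by simp]
    rw [get_restrictReal]
  rw [this]
  exact List.take_prefix _ _

lemma restrictReal_mem_NB_of_prefix {t : List Bool} {a : ℕ → Bool} (h : a ∈ NB t)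
    {n : ℕ} (hn : n ≤ t.length) : restrictReal a n <+: t := by
  have h1 := restrictReal_eq_of_mem_NB h
  calc restrictReal a n <+: restrictReal a t.length := restrictReal_prefix a hn
    _ = t := h1

lemma isOpen_NB (t : List Bool) : IsOpen (NB t) := by
  have : NB t = ⋂ i : Fin t.length, (fun a : ℕ → Bool => a i.1) ⁻¹' {t.get i} := by
    ext a; simp [NB, prefixOfReal, Set.mem_iInter]
  rw [this]
  exact isOpen_iInter_of_finite fun i =>
    (continuous_apply i.1).isOpen_preimage _ (isOpen_discrete _)

lemma isOpen_baire (v : List ℕ) : IsOpen (baire v) := by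
  have : baire v = ⋂ i : Fin v.length, (fun x : ℕ → ℕ => x i.1) ⁻¹' {v.get i} := by
    ext x; simp [baire, Set.mem_iInter]
  rw [this]
  exact isOpen_iInter_of_finite fun i =>
    (continuous_apply i.1).isOpen_preimage _ (isOpen_discrete _)

def listOf (x : ℕ → ℕ) (n : ℕ) : List ℕ := List.ofFn fun i : Fin n => x i.1

lemma mem_baire_iff {v : List ℕ} {x : ℕ → ℕ} :
    x ∈ baire v ↔ ∀ k (h : k < v.length), x k = v.get ⟨k, h⟩ :=
  ⟨fun h k hk => h ⟨k, hk⟩, fun h i => h i.1 i.2⟩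

lemma mem_baire_listOf (x : ℕ → ℕ) (n : ℕ) : x ∈ baire (listOf x n) := by
  rw [mem_baire_iff]
  intro k hk
  simp [listOf]

lemma baire_anti {s t : List ℕ} (h : s <+: t) : baire t ⊆ baire s := by
  intro x hx
  rw [mem_baire_iff] at hx ⊢
  intro k hk
  have hk2 : k < t.length := lt_of_lt_of_le hk h.length_le
  rw [hx k hk2]
  have := h.getElem (i := k) hk
  simp only [List.get_eq_getElem]
  exact this.symm

lemma listOf_prefix_of_mem_baire {v : List ℕ} {x : ℕ → ℕ} (h : x ∈ baire v) {n : ℕ}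
    (hn : v.length ≤ n) : v <+: listOf x n := by
  have h1 : v = (listOf x n).take v.length := by
    apply List.ext_get (by simp [listOf]; omega)
    intro k h1 h2
    rw [show ((listOf x n).take v.length).get ⟨k, h2⟩ = (listOf x n).get ⟨k, by simp [listOf]; omega⟩ by simp]
    have : (listOf x n).get ⟨k, by simp [listOf]; omega⟩ = x k := by simp [listOf]
    rw [this]
    exact ((mem_baire_iff.mp h) k h1).symm
  rw [h1]
  exact List.take_prefix _ _

lemma getD_extension_mem_baire (v : List ℕ) : (fun t => v.getD t 0) ∈ baire v := by
  rw [mem_baire_iff]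
  intro k hk
  simp [List.getD_eq_getElem, hk]

/-- every neighborhood in a countable product of discrete spaces contains a cylinder -/
lemma cylinder_subset_nhds {α : Type*} [TopologicalSpace α] [DiscreteTopology α]
    {s : Set (ℕ → α)} {a : ℕ → α} (h : s ∈ 𝓝 a) :
    ∃ M, ∀ b : ℕ → α, (∀ k < M, b k = a k) → b ∈ s := by
  rw [nhds_pi, Filter.mem_pi] at h
  obtain ⟨I, hIf, t, ht, hsub⟩ := h
  obtain ⟨M, hM⟩ := hIf.bddAbove
  refine ⟨M + 1, fun b hb => hsub ?_⟩
  intro i hi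
  rw [hb i (by have := hM hi; omega)]
  have := ht i
  rw [nhds_discrete, Filter.mem_pure] at this
  exact this

/-- every open set in `2^ω × ω^ω` contains a basic cylinder around each of its points -/
lemma cyl_subset_open {G : Set ((ℕ → Bool) × (ℕ → ℕ))} (hG : IsOpen G)
    {p : (ℕ → Bool) × (ℕ → ℕ)} (hp : p ∈ G) :
    ∃ M, NB (restrictReal p.1 M) ×ˢ baire (listOf p.2 M) ⊆ G := by
  have h := hG.mem_nhds hp
  rw [nhds_prod_eq, Filter.mem_prod_iff] at h
  obtain ⟨s, hs, t, ht, hsub⟩ := h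
  obtain ⟨M1, hM1⟩ := cylinder_subset_nhds hs
  obtain ⟨M2, hM2⟩ := cylinder_subset_nhds ht
  refine ⟨max M1 M2, fun q hq => hsub ⟨?_, ?_⟩⟩
  · apply hM1
    intro k hk
    have := (mem_NB.mp hq.1) k (by rw [length_restrictReal]; omega)
    rw [this, get_restrictReal]
  · apply hM2
    intro k hk
    have := (mem_baire_iff.mp hq.2) k (by simp [listOf]; omega)
    rw [this]
    simp [listOf]



variable {u : ℕ → List Bool}

/-- the Silver tree with defining tuples `u` -/
def tree (u : ℕ → List Bool) : Set (List Bool) :=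
  { s | ∃ (n : ℕ) (i : ℕ → Bool), s <+: silverWord u i n }

/-- the canonical branch of `tree u` determined by bits `i` -/
def realOf (u : ℕ → List Bool) (i : ℕ → Bool) : ℕ → Bool :=
  fun m => (full u i m).getD m false

lemma realOf_mem_NB_full (i : ℕ → Bool) (n : ℕ) : realOf u i ∈ NB (full u i n) := by
  rw [mem_NB]
  intro k hk
  have hk1 : k < (full u i k).length := lt_of_lt_of_le (Nat.lt_succ_self k) (length_full_ge i k)
  have hpre : full u i (min k n) <+: full u i (max k n) := full_prefix i (min_le_max)
  -- realOf u i k = (full u i k).getD k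
  have h1 : realOf u i k = (full u i k).get ⟨k, hk1⟩ := by
    rw [realOf, List.getD_eq_getElem _ _ hk1]; rfl
  have h2 : (full u i k).get ⟨k, hk1⟩ = (full u i (max k n)).get ⟨k, by
      have := (full_prefix (u := u) i (le_max_left k n)).length_le; omega⟩ := by
    have := (full_prefix (u := u) i (le_max_left k n)).getElem (i := k) hk1
    simpa using this
  have h3 : (full u i n).get ⟨k, hk⟩ = (full u i (max k n)).get ⟨k, by
      have := (full_prefix (u := u) i (le_max_right k n)).length_le; omega⟩ := by
    have := (full_prefix (u := u) i (le_max_right k n)).getElem (i := k) hk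
    simpa using this
  rw [h1, h2, h3]

lemma realOf_mem_branches (i : ℕ → Bool) : realOf u i ∈ branches (tree u) := by
  intro n
  refine ⟨n, i, ?_⟩
  rw [silverWord_eq_full]
  have h1 : n ≤ (full u i n).length := le_of_lt (lt_of_lt_of_le (Nat.lt_succ_self n) (length_full_ge i n))
  exact restrictReal_mem_NB_of_prefix (realOf_mem_NB_full i n) h1

/-- decoding branches: each branch of `tree u` passes through a word of any given index. -/
lemma branch_decode {a : ℕ → Bool} (ha : a ∈ branches (tree u)) (c : ℕ) :
    ∃ j : ℕ → Bool, restrictReal a ((full u j c).length) = full u j c := by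
  set L := (full u (fun _ => false) c).length with hL
  obtain ⟨n, i, hpre⟩ := ha L
  rw [silverWord_eq_full] at hpre
  have hlen : L ≤ (full u i n).length := by
    have := hpre.length_le
    rwa [length_restrictReal] at this
  have hcn : c ≤ n := by
    by_contra hcn
    push_neg at hcn
    have h2 := length_full_lt (u := u) i hcn
    have h3 : (full u i c).length = L := length_full i (fun _ => false) c
    omega
  have heq : restrictReal a L = full u i c := by
    apply eq_of_prefix_prefix hpre (full_prefix i hcn)
    rw [length_restrictReal, hL]
    exact length_full (fun _ => false) i c
  refine ⟨i, ?_⟩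
  have hLL : (full u i c).length = L := length_full i (fun _ => false) c
  rw [hLL]
  exact heq

lemma branches_mono {S T : Set (List Bool)} (h : S ⊆ T) : branches S ⊆ branches T :=
  fun _ ha n => h (ha n)

/-- ambient space -/
abbrev XX := (ℕ → Bool) × (ℕ → ℕ)

/-- relative density in `[T] × ω^ω` -/
def RelDense (u : ℕ → List Bool) (W : Set XX) : Prop :=
  ∀ O : Set XX, IsOpen O → (O ∩ branches (tree u) ×ˢ (univ : Set (ℕ → ℕ))).Nonempty →
    (O ∩ branches (tree u) ×ˢ (univ : Set (ℕ → ℕ)) ∩ W).Nonempty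

/-- single-part extension step -/
lemma step {W : Set XX} (hWo : IsOpen W) (hWd : RelDense u W) (i₀ : ℕ → Bool) (N : ℕ)
    (v : List ℕ) :
    ∃ r, N ≤ r ∧ ∃ j : ℕ → Bool, (∀ p ≤ N, j p = i₀ p) ∧ ∃ v', v <+: v' ∧
      NB (full u j r) ×ˢ baire v' ⊆ W := by
  -- the relatively open nonempty set
  set O : Set XX := NB (full u i₀ N) ×ˢ baire v with hO
  have hOopen : IsOpen O := (isOpen_NB _).prod (isOpen_baire _)
  have hOne : (O ∩ branches (tree u) ×ˢ (univ : Set (ℕ → ℕ))).Nonempty := by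
    refine ⟨(realOf u i₀, fun t => v.getD t 0), ⟨⟨realOf_mem_NB_full i₀ N,
      getD_extension_mem_baire v⟩, ⟨realOf_mem_branches i₀, trivial⟩⟩⟩
  obtain ⟨⟨a, x⟩, ⟨⟨haO, hxO⟩, ⟨haB, -⟩⟩, hW⟩ := hWd O hOopen hOne
  -- cylinder inside W around (a, x)
  obtain ⟨M, hM⟩ := cyl_subset_open hWo hW
  -- decode a on the tree at a large index
  set r := max N M with hr
  obtain ⟨j, hj⟩ := branch_decode haB r
  have hjlen : M ≤ (full u j r).length := by
    have := length_full_ge (u := u) j r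
    omega
  have hNr : N ≤ r := le_max_left N M
  have hagree : ∀ p ≤ N, j p = i₀ p := by
    have h1 : restrictReal a ((full u i₀ N).length) = full u i₀ N :=
      restrictReal_eq_of_mem_NB haO
    have h2 : full u j N = full u i₀ N := by
      apply eq_of_prefix_prefix (l := restrictReal a ((full u j r).length)) ?_ ?_
        (length_full j i₀ N)
      · rw [hj]; exact full_prefix j hNr
      · rw [← h1]
        apply restrictReal_prefix
        have h3 := (full_prefix (u := u) j hNr).length_le
        have h4 := length_full (u := u) i₀ j N
        omega
    exact full_inj_bits h2
  refine ⟨r, hNr, j, hagree, listOf x (max M v.length), ?_, ?_⟩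
  · exact listOf_prefix_of_mem_baire hxO (le_max_right _ _)
  · intro q hq
    apply hM
    constructor
    · have hpre : restrictReal a M <+: full u j r := by
        rw [← hj]
        exact restrictReal_prefix a hjlen
      exact NB_anti hpre hq.1
    · have hpre : listOf x M <+: listOf x (max M v.length) := by
        apply listOf_prefix_of_mem_baire (mem_baire_listOf x M)
        simp [listOf]
      exact baire_anti hpre hq.2

/-- processing a list of parts -/
lemma parts {W : Set XX} (hWo : IsOpen W) (hWd : RelDense u W) (A : Finset ℕ)
    (l : List (ℕ → Bool)) :
    ∀ (N₀ : ℕ) (g₀ : ℕ → Bool) (v₀ : List ℕ), (∀ a ∈ A, a < N₀) →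
    ∃ r, N₀ ≤ r ∧ ∃ g : ℕ → Bool, (∀ p < N₀, g p = g₀ p) ∧ ∃ v', v₀ <+: v' ∧
    ∀ τ ∈ l, ∀ i : ℕ → Bool, (∀ p ≤ r, p ∉ A → i p = g p) → (∀ p ∈ A, i p = τ p) →
      NB (full u i r) ×ˢ baire v' ⊆ W := by
  induction l with
  | nil =>
      intro N₀ g₀ v₀ _
      exact ⟨N₀, le_refl _, g₀, fun _ _ => rfl, v₀, List.prefix_refl _, fun τ hτ => absurd hτ
        List.not_mem_nil⟩
  | cons τ₀ l ih =>
      intro N₀ g₀ v₀ hA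
      obtain ⟨r1, hr1, g1, hg1, v1, hv1, hmain1⟩ := ih N₀ g₀ v₀ hA
      set i₀ : ℕ → Bool := fun p => if p ∈ A then τ₀ p else g1 p with hi₀
      obtain ⟨r2, hr2, j, hj, v2, hv2, hmain2⟩ := step hWo hWd i₀ r1 v1
      set g2 : ℕ → Bool := fun p => if p ∈ A then g1 p else j p with hg2def
      refine ⟨r2, le_trans hr1 hr2, g2, ?_, v2, hv1.trans hv2, ?_⟩
      · intro p hp
        by_cases hpA : p ∈ A
        · simp only [hg2def, if_pos hpA]
          exact hg1 p hp
        · simp only [hg2def, if_neg hpA]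
          rw [hj p (le_trans (le_of_lt hp) hr1)]
          simp only [hi₀, if_neg hpA]
          exact hg1 p hp
      · intro τ hτ i hi hiτ
        rcases List.mem_cons.mp hτ with hτ | hτ
        · subst hτ
          have heq : full u i r2 = full u j r2 := by
            apply full_congr
            intro p hp
            by_cases hpA : p ∈ A
            · rw [hiτ p hpA, hj p (le_trans (le_of_lt (hA p hpA)) hr1)]
              simp only [hi₀, if_pos hpA]
            · rw [hi p hp hpA]
              simp only [g2, if_neg hpA]
          rw [heq]
          exact hmain2
        · have hconstr : ∀ p ≤ r1, p ∉ A → i p = g1 p := by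
            intro p hp hpA
            rw [hi p (le_trans hp hr2) hpA]
            simp only [g2, if_neg hpA]
            rw [hj p hp]
            simp only [hi₀, if_neg hpA]
          have hIH := hmain1 τ hτ i hconstr hiτ
          intro q hq
          apply hIH
          exact ⟨NB_anti (full_prefix i hr2) hq.1, baire_anti hv2 hq.2⟩

/-- the core extension lemma: handling all parts over a finite kept set `A` -/
lemma core {W : Set XX} (hWo : IsOpen W) (hWd : RelDense u W) (A : Finset ℕ)
    (N₀ : ℕ) (g₀ : ℕ → Bool) (v₀ : List ℕ) (hA : ∀ a ∈ A, a < N₀) :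
    ∃ r, N₀ ≤ r ∧ ∃ g : ℕ → Bool, (∀ p < N₀, g p = g₀ p) ∧ ∃ v', v₀ <+: v' ∧
    ∀ i : ℕ → Bool, (∀ p ≤ r, p ∉ A → i p = g p) → NB (full u i r) ×ˢ baire v' ⊆ W := by
  classical
  set l : List (ℕ → Bool) := A.powerset.toList.map
    (fun B => fun p => decide (p ∈ B)) with hl
  obtain ⟨r, hr, g, hg, v', hv', hmain⟩ := parts hWo hWd A l N₀ g₀ v₀ hA
  refine ⟨r, hr, g, hg, v', hv', ?_⟩
  intro i hi
  set B : Finset ℕ := A.filter (fun p => i p = true) with hB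
  have hτl : (fun p => decide (p ∈ B)) ∈ l := by
    rw [hl]
    apply List.mem_map.mpr
    exact ⟨B, Finset.mem_toList.mpr (Finset.mem_powerset.mpr (Finset.filter_subset _ _)), rfl⟩
  apply hmain _ hτl i hi
  intro p hp
  by_cases h : i p = true
  · simp [hB, Finset.mem_filter, hp, h]
  · simp only [Bool.not_eq_true] at h
    simp [hB, Finset.mem_filter, hp, h]

/-! ### The fusion construction -/

structure St where
  N : ℕ
  g : ℕ → Bool
  A : Finset ℕ
  v : List ℕ

def Inv (s : St) : Prop := ∀ a ∈ s.A, a < s.N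

section Fusion

def StepP (u : ℕ → List Bool) (Us : ℕ → Set XX) (c : ℕ) (w : List ℕ) (s s' : St) : Prop :=
  s'.A = insert s.N s.A ∧ s.N < s'.N ∧ (∀ p < s.N, s'.g p = s.g p) ∧ w <+: s'.v ∧
  Inv s' ∧
  ∀ i : ℕ → Bool, (∀ p < s'.N, p ∉ s'.A → i p = s'.g p) →
    NB (full u i (s'.N - 1)) ×ˢ baire s'.v ⊆ Us c

variable {u : ℕ → List Bool} {Us : ℕ → Set XX}

lemma step_exists (hUo : ∀ c, IsOpen (Us c)) (hUd : ∀ c, RelDense u (Us c))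
    {s : St} (hs : Inv s) (c : ℕ) (w : List ℕ) :
    ∃ s', StepP u Us c w s s' := by
  obtain ⟨r, hr, g, hg, v', hv', hmain⟩ := core (hUo c) (hUd c) (insert s.N s.A)
    (s.N + 1) s.g w (by
      intro a ha
      rcases Finset.mem_insert.mp ha with h | h
      · omega
      · have := hs a h; omega)
  refine ⟨⟨r + 1, g, insert s.N s.A, v'⟩, rfl, ?_, ?_, hv', ?_, ?_⟩
  · show s.N < r + 1
    omega
  · intro p hp
    exact hg p (by omega)
  · intro a ha
    show a < r + 1
    rcases Finset.mem_insert.mp ha with h | h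
    · omega
    · have := hs a h; omega
  · intro i hi
    show NB (full u i (r + 1 - 1)) ×ˢ baire v' ⊆ Us c
    simp only [Nat.add_sub_cancel]
    exact hmain i (fun p hp hpA => hi p (by show p < r + 1; omega) hpA)

noncomputable def stSeq (hUo : ∀ c, IsOpen (Us c)) (hUd : ∀ c, RelDense u (Us c))
    (e : ℕ → ℕ × List ℕ) : ℕ → {s : St // Inv s}
  | 0 => ⟨⟨0, fun _ => false, ∅, []⟩, by intro a ha; simp at ha⟩
  | j + 1 =>
      ⟨(step_exists hUo hUd (stSeq hUo hUd e j).2 (e j).1 (e j).2).choose,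
       (step_exists hUo hUd (stSeq hUo hUd e j).2 (e j).1 (e j).2).choose_spec.2.2.2.2.1⟩

lemma stSeq_spec (hUo : ∀ c, IsOpen (Us c)) (hUd : ∀ c, RelDense u (Us c))
    (e : ℕ → ℕ × List ℕ) (j : ℕ) :
    StepP u Us (e j).1 (e j).2 (stSeq hUo hUd e j).1 (stSeq hUo hUd e (j + 1)).1 :=
  (step_exists hUo hUd (stSeq hUo hUd e j).2 (e j).1 (e j).2).choose_spec

end Fusion

section Fusion2

variable {u : ℕ → List Bool} {Us : ℕ → Set XX}

theorem fusion (hUo : ∀ c, IsOpen (Us c)) (hUd : ∀ c, RelDense u (Us c)) :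
    ∃ w : ℕ → List Bool, tree w ⊆ tree u ∧ ∃ D : Set (ℕ → ℕ), IsGδ D ∧ Dense D ∧
      branches (tree w) ×ˢ D ⊆ ⋂ c, Us c := by
  classical
  set e : ℕ → ℕ × List ℕ := fun n => (Denumerable.eqv (ℕ × List ℕ)).symm n with he
  have hesurj : ∀ p : ℕ × List ℕ, ∃ j, e j = p := fun p =>
    ⟨Denumerable.eqv (ℕ × List ℕ) p, by simp [he]⟩
  set st := stSeq hUo hUd e with hst
  set Nf : ℕ → ℕ := fun j => (st j).1.N with hNf
  have spec : ∀ j, StepP u Us (e j).1 (e j).2 (st j).1 (st (j + 1)).1 :=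
    stSeq_spec hUo hUd e
  have hmono : StrictMono Nf := strictMono_nat_of_lt_succ fun j => (spec j).2.1
  have hge : ∀ j, j ≤ Nf j := by
    intro j
    induction j with
    | zero => omega
    | succ j ih =>
        have hlt : Nf j < Nf (j + 1) := (spec j).2.1
        omega
  have hA : ∀ j p, p ∈ (st j).1.A ↔ ∃ q, q < j ∧ Nf q = p := by
    intro j
    induction j with
    | zero =>
        intro p
        have h0 : (st 0).1.A = ∅ := rfl
        simp [h0]
    | succ j ih =>
        intro p
        rw [(spec j).1, Finset.mem_insert]
        constructor
        · rintro (h | h)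
          · exact ⟨j, by omega, h.symm⟩
          · obtain ⟨q, hq, hq2⟩ := (ih p).mp h
            exact ⟨q, by omega, hq2⟩
        · rintro ⟨q, hq, hq2⟩
          rcases Nat.lt_succ_iff_lt_or_eq.mp hq with h | h
          · exact Or.inr ((ih p).mpr ⟨q, h, hq2⟩)
          · subst h; exact Or.inl hq2.symm
  have gstab : ∀ j m, j ≤ m → ∀ p, p < Nf j → (st m).1.g p = (st j).1.g p := by
    intro j m hjm
    induction m, hjm using Nat.le_induction with
    | base => intro p _; rfl
    | succ m hjm ih =>
        intro p hp
        have h1 : p < Nf m := lt_of_lt_of_le hp (hmono.monotone hjm)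
        rw [(spec m).2.2.1 p h1]
        exact ih p hp
  set ginf : ℕ → Bool := fun p => (st (p + 1)).1.g p with hginf_def
  have hginf : ∀ j p, p < Nf j → ginf p = (st j).1.g p := by
    intro j p hp
    rcases le_total j (p + 1) with h | h
    · exact gstab j (p + 1) h p hp
    · have hp2 : p < Nf (p + 1) := lt_of_lt_of_le (Nat.lt_succ_self p) (hge (p + 1))
      exact (gstab (p + 1) j h p hp2).symm
  set istar : (ℕ → Bool) → ℕ → Bool :=
    fun b p => if h : ∃ q, Nf q = p then b (Nat.find h) else ginf p with histar
  have istar_keep : ∀ b q, istar b (Nf q) = b q := by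
    intro b q
    have h : ∃ r, Nf r = Nf q := ⟨q, rfl⟩
    simp only [histar, dif_pos h]
    congr 1
    exact hmono.injective (Nat.find_spec h)
  have istar_free : ∀ b p, (¬ ∃ q, Nf q = p) → istar b p = ginf p := by
    intro b p h
    simp only [histar, dif_neg h]
  have norange : ∀ q p, Nf q < p → p < Nf (q + 1) → ¬∃ r, Nf r = p := by
    rintro q p h1 h2 ⟨r, hr⟩
    rcases le_or_gt r q with h | h
    · have := hmono.monotone h; omega
    · have := hmono.monotone (by omega : q + 1 ≤ r); omega
  have norange0 : ∀ p, p < Nf 0 → ¬∃ r, Nf r = p := by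
    rintro p h1 ⟨r, hr⟩
    have := hmono.monotone (Nat.zero_le r); omega
  -- the defining tuples of the final Silver tree
  set wstar : ℕ → List Bool := fun q =>
    match q with
    | 0 => mid u ginf 0 (Nf 0) ++ u (Nf 0)
    | q + 1 => mid u ginf (Nf q + 1) (Nf (q + 1)) ++ u (Nf (q + 1)) with hwstar
  have merge : ∀ b q, full wstar b q = full u (istar b) (Nf q) := by
    intro b q
    induction q with
    | zero =>
        have h1 : full wstar b 0 = wstar 0 ++ [b 0] := by
          rw [← silverWord_eq_full]; rfl
        have h2 : full u (istar b) (Nf 0) =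
            mid u (istar b) 0 (Nf 0) ++ (u (Nf 0) ++ [istar b (Nf 0)]) := by
          rw [full, mid_append (istar b) (Nat.zero_le _) (Nat.le_succ _), mid_single]
        rw [h1, h2, istar_keep b 0]
        have h3 : mid u (istar b) 0 (Nf 0) = mid u ginf 0 (Nf 0) :=
          mid_congr fun p _ hp => istar_free b p (norange0 p hp)
        rw [h3, hwstar]
        simp [List.append_assoc]
    | succ q ih =>
        rw [full_succ, ih]
        have h2 : full u (istar b) (Nf (q + 1)) =
            full u (istar b) (Nf q) ++ (mid u (istar b) (Nf q + 1) (Nf (q + 1)) ++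
              (u (Nf (q + 1)) ++ [istar b (Nf (q + 1))])) := by
          have hq1 : Nf q < Nf (q + 1) := hmono (Nat.lt_succ_self q)
          rw [full, full, mid_append (istar b) (by omega : 0 ≤ Nf q + 1)
            (by omega : Nf q + 1 ≤ Nf (q + 1) + 1),
            mid_append (istar b) (by omega : Nf q + 1 ≤ Nf (q + 1))
            (by omega : Nf (q + 1) ≤ Nf (q + 1) + 1), mid_single]
        rw [h2, istar_keep b (q + 1)]
        have h3 : mid u (istar b) (Nf q + 1) (Nf (q + 1)) =
            mid u ginf (Nf q + 1) (Nf (q + 1)) :=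
          mid_congr fun p hp1 hp2 => istar_free b p (norange q p (by omega) hp2)
        rw [h3]
        simp [hwstar, List.append_assoc]
  -- compatibility of merged bit-sequences with the fusion constraints
  have compat : ∀ b j, ∀ p < Nf (j + 1), p ∉ (st (j + 1)).1.A →
      istar b p = (st (j + 1)).1.g p := by
    intro b j p hp hpA
    have hnr : ¬∃ r, Nf r = p := by
      rintro ⟨r, hr⟩
      rcases lt_or_ge r (j + 1) with h | h
      · exact hpA ((hA (j + 1) p).mpr ⟨r, h, hr⟩)
      · have := hmono.monotone h; omega
    rw [istar_free b p hnr]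
    exact hginf (j + 1) p hp
  -- the final tree
  refine ⟨wstar, ?_, ?_⟩
  · rintro s ⟨n, i, hpre⟩
    refine ⟨Nf n, istar i, ?_⟩
    rw [silverWord_eq_full] at hpre ⊢
    rw [← merge]
    exact hpre
  · -- the dense Gδ set
    set Oc : ℕ → Set (ℕ → ℕ) := fun c =>
      ⋃ j, ⋃ (_ : (e j).1 = c), baire ((st (j + 1)).1.v) with hOc
    have hOcOpen : ∀ c, IsOpen (Oc c) :=
      fun c => isOpen_iUnion fun j => isOpen_iUnion fun _ => isOpen_baire _
    have hOcDense : ∀ c, Dense (Oc c) := by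
      intro c
      rw [dense_iff_inter_open]
      rintro U hU ⟨x, hx⟩
      obtain ⟨M, hM⟩ := cylinder_subset_nhds (hU.mem_nhds hx)
      obtain ⟨j, hj⟩ := hesurj (c, listOf x M)
      have hj1 : (e j).1 = c := by rw [hj]
      have hj2 : (e j).2 = listOf x M := by rw [hj]
      have hvpre : listOf x M <+: (st (j + 1)).1.v := by
        have := (spec j).2.2.2.1
        rwa [hj2] at this
      refine ⟨fun t => ((st (j + 1)).1.v).getD t 0, ?_, ?_⟩
      · apply hM
        intro k hk
        have h1 : (fun t => ((st (j + 1)).1.v).getD t 0) ∈ baire (listOf x M) :=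
          baire_anti hvpre (getD_extension_mem_baire _)
        have h2 := (mem_baire_iff.mp h1) k (by simp [listOf]; omega)
        rw [h2]
        simp [listOf]
      · exact mem_iUnion.mpr ⟨j, mem_iUnion.mpr ⟨hj1, getD_extension_mem_baire _⟩⟩
    refine ⟨⋂ c, Oc c, ?_, ?_, ?_⟩
    · exact IsGδ.iInter fun c => (hOcOpen c).isGδ
    · haveI : BaireSpace (ℕ → ℕ) := polishBaire _
      exact dense_iInter_of_isOpen hOcOpen hOcDense
    · rintro ⟨a, x⟩ ⟨ha, hx⟩
      rw [mem_iInter]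
      intro c
      obtain ⟨j, hj⟩ := mem_iUnion.mp (mem_iInter.mp hx c)
      obtain ⟨hj1, hxj⟩ := mem_iUnion.mp hj
      -- decode the branch `a` at a large index
      obtain ⟨b, hb⟩ := branch_decode (u := wstar) ha (Nf (j + 1))
      have haNB : a ∈ NB (full wstar b (Nf (j + 1))) := by
        rw [← hb]
        exact mem_NB_restrictReal a _
      rw [merge] at haNB
      have hr : Nf (j + 1) - 1 ≤ Nf (Nf (j + 1)) := by
        have := hge (Nf (j + 1)); omega
      have haNB2 : a ∈ NB (full u (istar b) (Nf (j + 1) - 1)) :=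
        NB_anti (full_prefix (istar b) hr) haNB
      have := (spec j).2.2.2.2.2 (istar b) (compat b j)
      rw [hj1] at this
      exact this ⟨haNB2, hxj⟩

end Fusion2

/-! ### Part A : decomposition of a Borel function -/

lemma isClosed_branches (T : Set (List Bool)) : IsClosed (branches T) := by
  rw [← isOpen_compl_iff, isOpen_iff_mem_nhds]
  intro a ha
  simp only [mem_compl_iff, branches, mem_setOf_eq, not_forall] at ha
  obtain ⟨n, hn⟩ := ha
  have hsub : NB (restrictReal a n) ⊆ (branches T)ᶜ := by
    intro b hb hbT
    apply hn
    have h1 := restrictReal_eq_of_mem_NB hb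
    rw [length_restrictReal] at h1
    rw [← h1]
    exact hbT n
  exact Filter.mem_of_superset ((isOpen_NB _).mem_nhds (mem_NB_restrictReal a n)) hsub

theorem partA {u : ℕ → List Bool} (f : XX → ℕ → Bool) (hf : Measurable f) :
    ∃ Us : ℕ → Set XX, (∀ c, IsOpen (Us c)) ∧ (∀ c, RelDense u (Us c)) ∧
      ∀ p ∈ (branches (tree u) ×ˢ (univ : Set (ℕ → ℕ))) ∩ ⋂ c, Us c, ∀ m,
        ∃ O, IsOpen O ∧ p ∈ O ∧
          ∀ q ∈ O ∩ ((branches (tree u) ×ˢ (univ : Set (ℕ → ℕ))) ∩ ⋂ c, Us c),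
            f q m = f p m := by
  classical
  set Y : Set XX := branches (tree u) ×ˢ (univ : Set (ℕ → ℕ)) with hYdef
  have hYc : IsClosed Y := (isClosed_branches _).prod isClosed_univ
  haveI : PolishSpace XX := { }
  haveI : PolishSpace Y := hYc.polishSpace
  haveI : BaireSpace Y := polishBaire _
  have hmeas : ∀ (m : ℕ) (bb : Bool), MeasurableSet {z : Y | f z.1 m = bb} := by
    intro m bb
    have h1 : Measurable fun z : Y => f z.1 m :=
      (measurable_pi_apply m).comp (hf.comp measurable_subtype_coe)
    exact h1 (measurableSet_singleton bb)
  choose Uop hUopen hUeq using fun (m : ℕ) (bb : Bool) => (hmeas m bb).residualEq_isOpen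
  set G : Set Y := ⋂ m, ⋂ bb, {z : Y | (f z.1 m = bb) = (z ∈ Uop m bb)} with hGdef
  have hG : G ∈ residual Y := by
    apply countable_iInter_mem.mpr
    intro m
    apply countable_iInter_mem.mpr
    intro bb
    exact hUeq m bb
  obtain ⟨t, htG, htGδ, htd⟩ := mem_residual.mp hG
  obtain ⟨Tset, hTopen, hTcount, hTeq⟩ := htGδ
  have hne : (insert (univ : Set Y) Tset).Nonempty := ⟨univ, mem_insert _ _⟩
  obtain ⟨seq, hseq⟩ := (hTcount.insert _).exists_eq_range hne
  have hopen' : ∀ n, IsOpen (seq n) := by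
    intro n
    have : seq n ∈ insert (univ : Set Y) Tset := by rw [hseq]; exact ⟨n, rfl⟩
    rcases mem_insert_iff.mp this with h | h
    · rw [h]; exact isOpen_univ
    · exact hTopen _ h
  choose Uamb hUambOpen hUambEq using fun n => isOpen_induced_iff.mp (hopen' n)
  have hsub : ∀ z : Y, z ∈ (⋂ n, (Subtype.val ⁻¹' Uamb n : Set Y)) → z ∈ G := by
    intro z hz
    apply htG
    rw [hTeq]
    intro s hs
    have : s ∈ insert (univ : Set Y) Tset := mem_insert_of_mem _ hs
    rw [hseq] at this
    obtain ⟨n, rfl⟩ := this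
    rw [← hUambEq n]
    exact mem_iInter.mp hz n
  refine ⟨Uamb, hUambOpen, fun c => ?_, ?_⟩
  · rintro O hO ⟨p, hpO, hpY⟩
    have hOY : IsOpen (Subtype.val ⁻¹' O : Set Y) := hO.preimage continuous_subtype_val
    have hOYne : (Subtype.val ⁻¹' O : Set Y).Nonempty := ⟨⟨p, hpY⟩, hpO⟩
    obtain ⟨z, hz1, hz2⟩ := dense_iff_inter_open.mp htd _ hOY hOYne
    refine ⟨z.1, ⟨hz1, z.2⟩, ?_⟩
    have : z ∈ (Subtype.val ⁻¹' Uamb c : Set Y) := by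
      rw [hUambEq c]
      rcases eq_or_ne (seq c) univ with h | h
      · rw [h]; trivial
      · have hmem : seq c ∈ insert (univ : Set Y) Tset := by rw [hseq]; exact ⟨c, rfl⟩
        rcases mem_insert_iff.mp hmem with h2 | h2
        · rw [h2]; trivial
        · rw [hTeq] at hz2
          exact hz2 _ h2
    exact this
  · intro p hp m
    have hpY : p ∈ Y := hp.1
    set z : Y := ⟨p, hpY⟩ with hz
    have hzG : z ∈ G := by
      apply hsub
      rw [mem_iInter]
      intro n
      exact mem_iInter.mp hp.2 n
    set bb : Bool := f p m with hbb
    have h1 : z ∈ Uop m bb := by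
      have := mem_iInter.mp (mem_iInter.mp hzG m) bb
      simp only [mem_setOf_eq] at this
      rw [← this]
    obtain ⟨O, hOopen, hOeq⟩ := isOpen_induced_iff.mp (hUopen m bb)
    refine ⟨O, hOopen, ?_, ?_⟩
    · have : z ∈ Subtype.val ⁻¹' O := by rw [← hOeq] at h1; exact h1
      exact this
    · rintro q ⟨hqO, hqY, hqU⟩
      set zq : Y := ⟨q, hqY⟩ with hzq
      have hzqG : zq ∈ G := by
        apply hsub
        rw [mem_iInter]
        intro n
        exact mem_iInter.mp hqU n
      have h2 : zq ∈ Uop m bb := by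
        rw [← hOeq]
        exact hqO
      have := mem_iInter.mp (mem_iInter.mp hzqG m) bb
      simp only [mem_setOf_eq] at this
      rw [this]
      exact h2

end Stmt8

open Stmt8 in
/-- if `T` is a Silver tree and `f : 2^ω × ω^ω → 2^ω` is Borel,
then there are a Silver tree `S ⊆ T` and a dense `G_δ` set `D ⊆ ω^ω` such that
`f` is continuous on `[S] × D`. -/
theorem stmt8 (T : Set (List Bool)) (hT : SilverTree T)
    (f : (ℕ → Bool) × (ℕ → ℕ) → (ℕ → Bool)) (hf : Measurable f) :
    ∃ (S : Set (List Bool)) (D : Set (ℕ → ℕ)),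
      SilverTree S ∧ S ⊆ T ∧ IsGδ D ∧ Dense D ∧
      ContinuousOn f (branches S ×ˢ D) := by
  classical
  obtain ⟨u, hu⟩ := hT
  have hTeq : T = tree u := hu
  obtain ⟨Us, hUo, hUd, hdec⟩ := partA (u := u) f hf
  obtain ⟨w, hw, D, hDGδ, hDd, hmain⟩ := fusion hUo hUd
  refine ⟨tree w, D, ⟨w, rfl⟩, by rw [hTeq]; exact hw, hDGδ, hDd, ?_⟩
  intro p hp
  have hp1 : p.1 ∈ branches (tree u) := branches_mono hw hp.1
  have hpΩ : p ∈ (branches (tree u) ×ˢ (univ : Set (ℕ → ℕ))) ∩ ⋂ c, Us c :=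
    ⟨⟨hp1, trivial⟩, hmain hp⟩
  apply continuousWithinAt_pi.mpr
  intro m
  obtain ⟨O, hOopen, hpO, hOdec⟩ := hdec p hpΩ m
  have hev : ∀ᶠ q in nhdsWithin p (branches (tree w) ×ˢ D), f q m = f p m := by
    filter_upwards [Filter.inter_mem (mem_nhdsWithin_of_mem_nhds (hOopen.mem_nhds hpO))
      self_mem_nhdsWithin] with q hq
    exact hOdec q ⟨hq.1, ⟨⟨branches_mono hw hq.2.1, trivial⟩, hmain hq.2⟩⟩
  exact Filter.Tendsto.congr' (by filter_upwards [hev] with q hq; exact hq.symm)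
    tendsto_const_nhds

-- #print axioms stmt8
end

section
/- Let T ⊆ 2^{<ω} be a Silver tree, let k < ω, let v ∈ ω^{<ω}, and let Z ⊆ [T] × ω^ω be open and dense in the subspace [T] × ω^ω. Then there exist a tuple w ∈ ω^{<ω} with v ⊆ w and a Silver tree S ⊑_{k+1} T, clopen in T, such that [S] × B_w ⊆ Z. -/
open Set

-- Auxiliary development

lemma oi_zero (u : ℕ → List Bool) : oi u 0 = (u 0).length := by simp [oi]

lemma oi_succ (u : ℕ → List Bool) (n : ℕ) :
    oi u (n + 1) = oi u n + (u (n + 1)).length + 1 := by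
  simp [oi, Finset.sum_range_succ]; ring

lemma oi_strictMono (u : ℕ → List Bool) : StrictMono (oi u) := by
  apply strictMono_nat_of_lt_succ
  intro n; rw [oi_succ]; omega

lemma oi_mono (u : ℕ → List Bool) : Monotone (oi u) := (oi_strictMono u).monotone

lemma le_oi (u : ℕ → List Bool) (n : ℕ) : n ≤ oi u n := by
  simp [oi]

lemma silverWord_length (u : ℕ → List Bool) (i : ℕ → Bool) (n : ℕ) :
    (silverWord u i n).length = oi u n + 1 := by
  induction n with
  | zero => simp [silverWord, oi_zero]
  | succ n ih => simp [silverWord, ih, oi_succ]; ring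

lemma silverWord_congr {u u' : ℕ → List Bool} {i i' : ℕ → Bool} {n : ℕ}
    (hu : ∀ m ≤ n, u m = u' m) (hi : ∀ m ≤ n, i m = i' m) :
    silverWord u i n = silverWord u' i' n := by
  induction n with
  | zero => simp [silverWord, hu 0 le_rfl, hi 0 le_rfl]
  | succ n ih =>
      simp only [silverWord]
      rw [ih (fun m hm => hu m (hm.trans n.le_succ)) (fun m hm => hi m (hm.trans n.le_succ)),
        hu (n+1) le_rfl, hi (n+1) le_rfl]

lemma silverWord_prefix_mono (u : ℕ → List Bool) (i : ℕ → Bool) {m n : ℕ} (h : m ≤ n) :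
    silverWord u i m <+: silverWord u i n := by
  induction n with
  | zero => simp_all
  | succ n ih =>
      rcases Nat.lt_or_ge m (n+1) with h' | h'
      · exact (ih (by omega)).trans ⟨_, rfl⟩
      · have : m = n + 1 := by omega
        subst this; exact List.prefix_refl _

lemma silverWord_getD_oi (u : ℕ → List Bool) (i : ℕ → Bool) {m n : ℕ} (h : m ≤ n) :
    (silverWord u i n).getD (oi u m) false = i m := by
  have hpref := silverWord_prefix_mono u i h
  have hlt : oi u m < (silverWord u i m).length := by rw [silverWord_length]; omega
  have hlt' : oi u m < (silverWord u i n).length := hlt.trans_le hpref.length_le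
  rw [List.getD_eq_getElem _ _ hlt', ← hpref.getElem hlt]
  clear hpref hlt'
  induction m with
  | zero =>
      simp only [silverWord, oi_zero]
      rw [List.getElem_append_right (by simp)]
      simp
  | succ m ih =>
      simp only [silverWord]
      rw [List.getElem_append_right (by rw [silverWord_length, oi_succ]; omega)]
      have hidx : oi u (m+1) - (silverWord u i m).length = (u (m+1)).length := by
        rw [silverWord_length, oi_succ]; omega
      simp only [hidx]
      exact List.getElem_concat_length rfl _


-- part 2
lemma List.getD_agree {l1 l2 : List Bool} (h : l1 <+: l2) {p : ℕ} (hp : p < l1.length)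
    (d : Bool) : l1.getD p d = l2.getD p d := by
  rw [List.getD_eq_getElem _ _ hp, List.getD_eq_getElem _ _ (hp.trans_le h.length_le),
    h.getElem hp]

lemma silverWord_getD_mid (u : ℕ → List Bool) (i : ℕ → Bool) {n p : ℕ}
    (h1 : oi u n < p) (h2 : p - (oi u n + 1) < (u (n+1)).length) :
    (silverWord u i (n+1)).getD p false = (u (n+1)).getD (p - (oi u n + 1)) false := by
  have hlen : (silverWord u i n).length = oi u n + 1 := silverWord_length u i n
  simp only [silverWord]
  rw [List.getD_eq_getElem _ _ (by simp [hlen]; omega),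
    List.getElem_append_right (by omega)]
  simp only [hlen]
  rw [List.getElem_append_left h2, List.getD_eq_getElem _ _ h2]

lemma silverWord_getD_indep (u : ℕ → List Bool) (i i' : ℕ → Bool) {n p : ℕ}
    (hp : p ≤ oi u n) (hne : ∀ m, p ≠ oi u m) :
    (silverWord u i n).getD p false = (silverWord u i' n).getD p false := by
  induction n with
  | zero =>
      have hlt : p < (u 0).length := by
        have := hne 0; rw [oi_zero] at *; omega
      simp only [silverWord]
      rw [List.getD_eq_getElem _ _ (by simp; omega), List.getD_eq_getElem _ _ (by simp; omega),
        List.getElem_append_left hlt, List.getElem_append_left hlt]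
  | succ n ih =>
      rcases Nat.lt_or_ge (oi u n) p with h' | h'
      · have hlt : p - (oi u n + 1) < (u (n+1)).length := by
          have := hne (n+1); rw [oi_succ] at *; omega
        rw [silverWord_getD_mid u i h' hlt, silverWord_getD_mid u i' h' hlt]
      · have h1 : p < (silverWord u i n).length := by rw [silverWord_length]; omega
        have h2 : p < (silverWord u i' n).length := by rw [silverWord_length]; omega
        rw [← List.getD_agree (silverWord_prefix_mono u i n.le_succ) h1,
          ← List.getD_agree (silverWord_prefix_mono u i' n.le_succ) h2]
        exact ih h'

def wordBody (u : ℕ → List Bool) (i : ℕ → Bool) : ℕ → List Bool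
  | 0 => u 0
  | n + 1 => silverWord u i n ++ u (n + 1)

lemma silverWord_eq_body (u : ℕ → List Bool) (i : ℕ → Bool) (n : ℕ) :
    silverWord u i n = wordBody u i n ++ [i n] := by
  cases n <;> simp [silverWord, wordBody]

lemma wordBody_congr {u : ℕ → List Bool} {i i' : ℕ → Bool} {n : ℕ}
    (hi : ∀ m < n, i m = i' m) : wordBody u i n = wordBody u i' n := by
  cases n with
  | zero => rfl
  | succ n => simp only [wordBody]
              rw [silverWord_congr (fun m _ => rfl) (fun m hm => hi m (by omega))]

lemma wordBody_length (u : ℕ → List Bool) (i : ℕ → Bool) (n : ℕ) :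
    (wordBody u i n).length = oi u n := by
  have h := congrArg List.length (silverWord_eq_body u i n)
  rw [silverWord_length] at h
  simp at h; omega

lemma splitLens_eq {T : Set (List Bool)} {u : ℕ → List Bool} (hT : IsSilver T u) :
    {L | ∃ s : List Bool, s.length = L ∧ s ++ [false] ∈ T ∧ s ++ [true] ∈ T}
      = Set.range (oi u) := by
  ext L
  constructor
  · rintro ⟨s, rfl, h0, h1⟩
    rw [hT] at h0 h1
    obtain ⟨n0, i0, h0⟩ := h0
    obtain ⟨n1, i1, h1⟩ := h1
    set N := max n0 n1 with hN
    have h0' : s ++ [false] <+: silverWord u i0 N :=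
      h0.trans (silverWord_prefix_mono u i0 (le_max_left _ _))
    have h1' : s ++ [true] <+: silverWord u i1 N :=
      h1.trans (silverWord_prefix_mono u i1 (le_max_right _ _))
    by_contra hc
    have hne : ∀ m, s.length ≠ oi u m := by
      intro m hm; exact hc ⟨m, hm.symm⟩
    have hlen : s.length < (s ++ [false]).length := by simp
    have hle : s.length ≤ oi u N := by
      have := h0'.length_le; rw [silverWord_length] at this; simp at this; omega
    have e0 : (silverWord u i0 N).getD s.length false = false := by
      rw [← List.getD_agree h0' (by simp)]
      rw [List.getD_eq_getElem _ _ (by simp)]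
      exact List.getElem_concat_length rfl _
    have e1 : (silverWord u i1 N).getD s.length false = true := by
      rw [← List.getD_agree h1' (by simp)]
      rw [List.getD_eq_getElem _ _ (by simp)]
      exact List.getElem_concat_length rfl _
    have := silverWord_getD_indep u i0 i1 hle hne
    rw [e0, e1] at this; exact Bool.false_ne_true this
  · rintro ⟨n, rfl⟩
    refine ⟨wordBody u (fun _ => false) n, wordBody_length u _ n, ?_, ?_⟩
    · rw [hT]
      refine ⟨n, (fun _ => false), ?_⟩
      rw [silverWord_eq_body]
    · rw [hT]
      refine ⟨n, (fun p => if p = n then true else false), ?_⟩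
      rw [silverWord_eq_body]
      have hb : wordBody u (fun p => if p = n then true else false) n
          = wordBody u (fun _ => false) n :=
        wordBody_congr (fun m hm => by simp [Nat.ne_of_lt hm])
      rw [hb]
      simp
lemma oi_unique {T : Set (List Bool)} {u u' : ℕ → List Bool}
    (h : IsSilver T u) (h' : IsSilver T u') : oi u = oi u' := by
  have := (splitLens_eq h).symm.trans (splitLens_eq h')
  exact (StrictMono.range_inj (oi_strictMono u) (oi_strictMono u')).mp this

lemma restrictReal_length (a : ℕ → Bool) (m : ℕ) : (restrictReal a m).length = m := by
  simp [restrictReal]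

lemma restrictReal_getElem (a : ℕ → Bool) (m p : ℕ) (hp : p < (restrictReal a m).length) :
    (restrictReal a m)[p] = a p := by
  simp [restrictReal]

lemma restrictReal_prefix_iff {a : ℕ → Bool} {m : ℕ} {l : List Bool} :
    restrictReal a m <+: l ↔ m ≤ l.length ∧ ∀ p < m, l.getD p false = a p := by
  constructor
  · intro h
    have hlen := h.length_le; rw [restrictReal_length] at hlen
    refine ⟨hlen, fun p hp => ?_⟩
    rw [← List.getD_agree h (by rw [restrictReal_length]; exact hp),
      List.getD_eq_getElem _ _ (by rw [restrictReal_length]; exact hp),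
      restrictReal_getElem]
  · rintro ⟨hlen, hv⟩
    rw [List.prefix_iff_eq_take]
    apply List.ext_getElem
    · simp [restrictReal_length]; omega
    · intro p h1 h2
      rw [restrictReal_getElem, List.getElem_take,
        ← List.getD_eq_getElem _ false, hv p (by rwa [restrictReal_length] at h1)]

def canBranch (u : ℕ → List Bool) (g : ℕ → Bool) : ℕ → Bool :=
  fun p => (silverWord u g p).getD p false

lemma canBranch_eq (u : ℕ → List Bool) (g : ℕ → Bool) {n p : ℕ} (hp : p ≤ oi u n) :
    canBranch u g p = (silverWord u g n).getD p false := by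
  rcases le_total p n with h | h
  · exact List.getD_agree (silverWord_prefix_mono u g h)
      (by rw [silverWord_length]; have := le_oi u p; omega) false
  · exact (List.getD_agree (silverWord_prefix_mono u g h)
      (by rw [silverWord_length]; omega) false).symm

lemma canBranch_mem {T : Set (List Bool)} {u : ℕ → List Bool} (hT : IsSilver T u)
    (g : ℕ → Bool) : canBranch u g ∈ branches T := by
  intro m
  rw [hT]
  refine ⟨m, g, restrictReal_prefix_iff.mpr ⟨by rw [silverWord_length]; have := le_oi u m; omega,
    fun p hp => ?_⟩⟩
  exact (canBranch_eq u g (by have := le_oi u m; omega)).symm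

lemma canBranch_restrict (u : ℕ → List Bool) (g : ℕ → Bool) (n : ℕ) :
    restrictReal (canBranch u g) (oi u n + 1) = silverWord u g n := by
  apply List.ext_getElem
  · rw [restrictReal_length, silverWord_length]
  · intro p h1 h2
    rw [restrictReal_getElem, canBranch_eq u g (by rwa [restrictReal_length, Nat.lt_succ_iff] at h1),
      List.getD_eq_getElem _ _ h2]

lemma branch_restrict {T : Set (List Bool)} {u : ℕ → List Bool} (hT : IsSilver T u)
    {a : ℕ → Bool} (ha : a ∈ branches T) (n : ℕ) :
    restrictReal a (oi u n + 1) = silverWord u (fun m => a (oi u m)) n := by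
  have h := ha (oi u n + 1)
  rw [hT] at h
  obtain ⟨n', j, hpref⟩ := h
  have hlen : oi u n + 1 ≤ oi u n' + 1 := by
    have := hpref.length_le; rwa [restrictReal_length, silverWord_length] at this
  have hn : n ≤ n' := ((oi_strictMono u).le_iff_le).mp (by omega)
  have heq : restrictReal a (oi u n + 1) = silverWord u j n := by
    rcases List.prefix_or_prefix_of_prefix hpref (silverWord_prefix_mono u j hn) with h | h
    · exact h.eq_of_length (by rw [restrictReal_length, silverWord_length])
    · exact (h.eq_of_length (by rw [restrictReal_length, silverWord_length])).symm
  rw [heq]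
  refine silverWord_congr (fun _ _ => rfl) (fun m hm => ?_)
  have hlt : oi u m < oi u n + 1 := by have := oi_mono u hm; omega
  have h2 : a (oi u m) = (restrictReal a (oi u n + 1)).getD (oi u m) false := by
    rw [List.getD_eq_getElem _ _ (by rw [restrictReal_length]; omega), restrictReal_getElem]
  rw [h2, heq, silverWord_getD_oi u j hm]

lemma branch_getD {T : Set (List Bool)} {u : ℕ → List Bool} (hT : IsSilver T u)
    {a : ℕ → Bool} (ha : a ∈ branches T) {n p : ℕ} (hp : p ≤ oi u n) :
    a p = (silverWord u (fun m => a (oi u m)) n).getD p false := by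
  rw [← branch_restrict hT ha n, List.getD_eq_getElem _ _ (by rw [restrictReal_length]; omega),
    restrictReal_getElem]

lemma branches_mono {S T : Set (List Bool)} (h : S ⊆ T) : branches S ⊆ branches T :=
  fun _ ha n => h (ha n)


-- part 3 : condensation
def seg (u : ℕ → List Bool) (b : ℕ → Bool) (k : ℕ) : ℕ → List Bool
  | 0 => u (k+1)
  | r+1 => seg u b k r ++ ([b (k+1+r)] ++ u (k+2+r))

def condense (u : ℕ → List Bool) (b : ℕ → Bool) (k r : ℕ) : ℕ → List Bool :=
  fun n => if n < k+1 then u n else if n = k+1 then seg u b k r else u (n + r)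

def blendI (b i : ℕ → Bool) (k r : ℕ) : ℕ → Bool :=
  fun m => if m ≤ k then i m else if m ≤ k + r then b m else i (m - r)

lemma seg_congr {u : ℕ → List Bool} {g g' : ℕ → Bool} {k r : ℕ}
    (h : ∀ m, k + 1 ≤ m → m ≤ k + r → g m = g' m) : seg u g k r = seg u g' k r := by
  induction r with
  | zero => rfl
  | succ r ih =>
      simp only [seg]
      rw [ih (fun m h1 h2 => h m h1 (by omega)), h (k+1+r) (by omega) (by omega)]

lemma silverWord_split (u : ℕ → List Bool) (g : ℕ → Bool) (k r : ℕ) :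
    silverWord u g (k+1+r) = silverWord u g k ++ (seg u g k r ++ [g (k+1+r)]) := by
  induction r with
  | zero => simp [silverWord, seg]
  | succ r ih =>
      have e : k+1+(r+1) = (k+1+r)+1 := rfl
      rw [e]
      show silverWord u g (k+1+r) ++ _ = _
      rw [ih]
      have e2 : k+2+r = k+1+r+1 := by omega
      simp [seg, e2, List.append_assoc]

lemma condense_word_le {u : ℕ → List Bool} {b : ℕ → Bool} {k r n : ℕ} (hn : n ≤ k)
    (i : ℕ → Bool) : silverWord (condense u b k r) i n = silverWord u i n :=
  silverWord_congr (fun m hm => by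
    simp only [condense]; rw [if_pos (by omega)]) (fun _ _ => rfl)

lemma condense_word_gt (u : ℕ → List Bool) (b : ℕ → Bool) (k r t : ℕ) (i : ℕ → Bool) :
    silverWord (condense u b k r) i (k+1+t) = silverWord u (blendI b i k r) (k+1+r+t) := by
  induction t with
  | zero =>
      simp only [Nat.add_zero]
      show silverWord (condense u b k r) i k ++ _ = _
      rw [condense_word_le (le_refl k),
        silverWord_congr (u' := u) (i' := blendI b i k r) (fun _ _ => rfl)
          (fun m hm => by simp [blendI, hm]),
        silverWord_split u (blendI b i k r) k r]
      have h1 : condense u b k r (k+1) = seg u b k r := by simp [condense]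
      have h2 : seg u (blendI b i k r) k r = seg u b k r :=
        seg_congr (fun m hm1 hm2 => by simp only [blendI]; rw [if_neg (by omega), if_pos (by omega)])
      have h3 : blendI b i k r (k+1+r) = i (k+1) := by
        simp only [blendI]
        rw [if_neg (by omega), if_neg (by omega)]
        congr 1; omega
      rw [h1, h2, h3]
  | succ t ih =>
      have e1 : k+1+(t+1) = (k+1+t)+1 := rfl
      have e2 : k+1+r+(t+1) = (k+1+r+t)+1 := rfl
      rw [e1, e2]
      show silverWord (condense u b k r) i (k+1+t) ++ _
        = silverWord u (blendI b i k r) (k+1+r+t) ++ _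
      rw [ih]
      congr 1
      have h1 : condense u b k r (k+1+t+1) = u (k+1+r+t+1) := by
        simp only [condense]
        rw [if_neg (by omega), if_neg (by omega)]
        congr 1; omega
      have h2 : blendI b i k r (k+1+r+t+1) = i (k+1+t+1) := by
        simp only [blendI]
        rw [if_neg (by omega), if_neg (by omega)]
        congr 1; omega
      rw [h1, h2]

lemma oi_congr {u u' : ℕ → List Bool} {n : ℕ} (h : ∀ m ≤ n, u m = u' m) :
    oi u n = oi u' n := by
  unfold oi
  congr 1
  exact Finset.sum_congr rfl fun m hm => by
    rw [h m (by simpa [Nat.lt_succ_iff] using Finset.mem_range.mp hm)]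

lemma oi_condense_le (u : ℕ → List Bool) (b : ℕ → Bool) (k r : ℕ) {n : ℕ} (hn : n ≤ k) :
    oi (condense u b k r) n = oi u n :=
  (oi_congr (fun m hm => by simp only [condense]; rw [if_pos (by omega)])).symm

lemma oi_condense_succ (u : ℕ → List Bool) (b : ℕ → Bool) (k r : ℕ) :
    oi (condense u b k r) (k+1) = oi u (k+1+r) := by
  have h := congrArg List.length (condense_word_gt u b k r 0 (fun _ => false))
  rw [silverWord_length, silverWord_length] at h
  simp only [Nat.add_zero] at h
  omega

lemma word_prefix_bits {u : ℕ → List Bool} {G j : ℕ → Bool} {M n : ℕ}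
    (h : silverWord u G M <+: silverWord u j n) {m : ℕ} (hm : m ≤ M) (hMn : M ≤ n) :
    j m = G m := by
  rw [← silverWord_getD_oi u G hm, ← silverWord_getD_oi u j (hm.trans hMn)]
  exact (List.getD_agree h (by rw [silverWord_length]; have := oi_mono u hm; omega) false).symm

lemma condense_subset {T : Set (List Bool)} {u : ℕ → List Bool} (hT : IsSilver T u)
    (b : ℕ → Bool) (k r : ℕ) :
    { s | ∃ (n : ℕ) (i : ℕ → Bool), s <+: silverWord (condense u b k r) i n } ⊆ T := by
  rintro s ⟨n, i, hpref⟩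
  rw [hT]
  rcases le_or_gt n k with hn | hn
  · exact ⟨n, i, by rwa [condense_word_le hn] at hpref⟩
  · have e : n = k + 1 + (n - (k+1)) := by omega
    rw [e, condense_word_gt] at hpref
    exact ⟨_, _, hpref⟩


-- part 4
def mixf (k : ℕ) (β : Fin (k+1) → Bool) (b : ℕ → Bool) : ℕ → Bool :=
  fun m => if h : m < k+1 then β ⟨m, h⟩ else b m

def extf (k : ℕ) (γ : Fin (k+2) → Bool) : ℕ → Bool :=
  fun m => if h : m < k+2 then γ ⟨m, h⟩ else false

lemma condense_word_gt' (u : ℕ → List Bool) (b : ℕ → Bool) (k r : ℕ) (i : ℕ → Bool) :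
    silverWord (condense u b k r) i (k+1) = silverWord u (blendI b i k r) (k+1+r) := by
  have h := condense_word_gt u b k r 0 i
  simpa using h

lemma condense_clopen {T : Set (List Bool)} {u : ℕ → List Bool} (hT : IsSilver T u)
    (b : ℕ → Bool) (k r : ℕ) :
    ClopenIn { s | ∃ (n : ℕ) (i : ℕ → Bool), s <+: silverWord (condense u b k r) i n } T := by
  set u' := condense u b k r with hu'
  set S := { s | ∃ (n : ℕ) (i : ℕ → Bool), s <+: silverWord u' i n } with hS
  have hsub : S ⊆ T := condense_subset hT b k r
  refine ⟨Finset.image (fun γ : Fin (k+2) → Bool => silverWord u' (extf k γ) (k+1))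
    Finset.univ, ?_, ?_⟩
  · intro s hs
    simp only [Finset.coe_image, Set.mem_image] at hs
    obtain ⟨γ, _, rfl⟩ := hs
    exact hsub ⟨k+1, extf k γ, List.prefix_refl _⟩
  · ext s
    constructor
    · rintro ⟨n, i, hpref⟩
      have hnode : silverWord u' (extf k (fun m : Fin (k+2) => i m.1)) (k+1)
          = silverWord u' i (k+1) :=
        silverWord_congr (fun _ _ => rfl)
          (fun m hm => by simp only [extf]; rw [dif_pos (by omega)])
      refine Set.mem_iUnion₂.mpr ⟨silverWord u' (extf k (fun m : Fin (k+2) => i m.1)) (k+1),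
        Finset.mem_image_of_mem _ (Finset.mem_univ _), ?_⟩
      rcases le_or_gt n (k+1) with hn | hn
      · exact ⟨hsub ⟨n, i, hpref⟩, Or.inr (by
          rw [hnode]; exact hpref.trans (silverWord_prefix_mono u' i hn))⟩
      · have hnode' : silverWord u' (extf k (fun m : Fin (k+2) => i m.1)) (k+1)
            <+: silverWord u' i n := by
          rw [hnode]; exact silverWord_prefix_mono u' i (by omega)
        refine ⟨hsub ⟨n, i, hpref⟩, ?_⟩
        rcases List.prefix_or_prefix_of_prefix hpref hnode' with h | h
        · exact Or.inr h
        · exact Or.inl h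
    · intro h
      obtain ⟨node, hmemF, hx⟩ := Set.mem_iUnion₂.mp h
      obtain ⟨γ, -, rfl⟩ := Finset.mem_image.mp hmemF
      obtain ⟨hsT, hcomp⟩ := hx
      rcases hcomp with hns | hsn
      · -- node <+: s
        have hsT' := hsT
        rw [hT] at hsT'
        obtain ⟨n, j, hsj⟩ := hsT'
        have hnode : silverWord u' (extf k γ) (k+1)
            = silverWord u (blendI b (extf k γ) k r) (k+1+r) := condense_word_gt' u b k r _
        have hnp : silverWord u (blendI b (extf k γ) k r) (k+1+r) <+: silverWord u j n := by
          rw [← hnode]; exact hns.trans hsj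
        have hlen : k+1+r ≤ n := by
          have h1 := hnp.length_le
          rw [silverWord_length, silverWord_length] at h1
          exact ((oi_strictMono u).le_iff_le).mp (by omega)
        have hbits : ∀ m ≤ k+1+r, j m = blendI b (extf k γ) k r m :=
          fun m hm => word_prefix_bits hnp hm hlen
        set i' : ℕ → Bool := fun m => if m ≤ k then j m else j (m + r) with hi'
        have hword : silverWord u' i' (k+1+(n-(k+1+r))) = silverWord u j n := by
          rw [condense_word_gt]
          have e : k+1+r+(n-(k+1+r)) = n := by omega
          rw [e]
          refine silverWord_congr (fun _ _ => rfl) (fun m hm => ?_)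
          by_cases h1 : m ≤ k
          · simp only [blendI, hi', if_pos h1]
          · by_cases h2 : m ≤ k + r
            · simp only [blendI, if_neg h1, if_pos h2]
              rw [hbits m (by omega), blendI, if_neg h1, if_pos h2]
            · simp only [blendI, hi', if_neg h1, if_neg h2]
              rw [if_neg (by omega)]
              congr 1; omega
        exact ⟨k+1+(n-(k+1+r)), i', by rw [hword]; exact hsj⟩
      · -- s <+: node
        exact ⟨k+1, extf k γ, hsn⟩

lemma condense_branch_agree {u : ℕ → List Bool} (b : ℕ → Bool) (k r : ℕ) {x' : ℕ → Bool}
    (hx : x' ∈ branches { s | ∃ (n : ℕ) (i : ℕ → Bool),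
      s <+: silverWord (condense u b k r) i n }) :
    ∀ p < oi u (k+r) + 1,
      x' p = (silverWord u (mixf k (fun j => x' (oi u j.1)) b) (k+r)).getD p false := by
  set u' := condense u b k r with hu'
  have hS : IsSilver { s | ∃ (n : ℕ) (i : ℕ → Bool), s <+: silverWord u' i n } u' := rfl
  intro p hp
  have h1 : oi u' (k+1) = oi u (k+1+r) := oi_condense_succ u b k r
  have hple : p ≤ oi u' (k+1) := by
    rw [h1]
    have := oi_mono u (show k+r ≤ k+1+r by omega)
    omega
  have h2 := branch_getD hS hx (n := k+1) hple
  have hw : silverWord u' (fun m => x' (oi u' m)) (k+1)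
      = silverWord u (blendI b (fun m => x' (oi u' m)) k r) (k+1+r) :=
    condense_word_gt' u b k r _
  have hagree : ∀ m ≤ k + r, mixf k (fun j => x' (oi u j.1)) b m
      = blendI b (fun m => x' (oi u' m)) k r m := by
    intro m hm
    by_cases h1' : m ≤ k
    · simp only [mixf, blendI, if_pos h1']
      rw [dif_pos (by omega)]
      rw [oi_condense_le u b k r h1']
    · simp only [mixf, blendI, if_neg h1', if_pos hm]
      rw [dif_neg (by omega)]
  have hpref : silverWord u (mixf k (fun j => x' (oi u j.1)) b) (k+r)
      <+: silverWord u (blendI b (fun m => x' (oi u' m)) k r) (k+1+r) := by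
    rw [silverWord_congr (u' := u) (fun _ _ => rfl) hagree]
    exact silverWord_prefix_mono u _ (by omega)
  rw [h2, hw, List.getD_agree hpref (by rw [silverWord_length]; omega) false]


-- part 5 : topology
lemma isOpen_cyl {α : Type*} [TopologicalSpace α] [DiscreteTopology α] (x : ℕ → α) (N : ℕ) :
    IsOpen { x' : ℕ → α | ∀ p < N, x' p = x p } := by
  have he : { x' : ℕ → α | ∀ p < N, x' p = x p }
      = ⋂ p ∈ Finset.range N, (fun x' : ℕ → α => x' p) ⁻¹' {x p} := by
    ext x'; simp [Finset.mem_range]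
  rw [he]
  exact isOpen_biInter_finset fun p _ =>
    (continuous_apply p).isOpen_preimage _ (isOpen_discrete _)

lemma baire_eq_cyl (w : List ℕ) :
    baire w = { y : ℕ → ℕ | ∀ p < w.length, y p = w.getD p 0 } := by
  ext y
  constructor
  · intro hy p hp
    rw [List.getD_eq_getElem _ _ hp]
    exact hy ⟨p, hp⟩
  · intro hy i
    rw [hy i.1 i.2]
    simp [List.getD_eq_getElem _ _ i.2, List.get_eq_getElem]

lemma isOpen_baire (w : List ℕ) : IsOpen (baire w) := by
  rw [baire_eq_cyl]
  exact isOpen_cyl (fun p => w.getD p 0) w.length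

lemma mem_baire_self (w : List ℕ) : (fun p => w.getD p 0) ∈ baire w := by
  rw [baire_eq_cyl]; intro p _; rfl

lemma List.getD_agree' {l1 l2 : List ℕ} (h : l1 <+: l2) {p : ℕ} (hp : p < l1.length) :
    l2.getD p 0 = l1.getD p 0 := by
  rw [List.getD_eq_getElem _ _ hp, List.getD_eq_getElem _ _ (hp.trans_le h.length_le),
    h.getElem hp]

lemma baire_anti {w w' : List ℕ} (h : w <+: w') : baire w' ⊆ baire w := by
  intro y hy
  rw [baire_eq_cyl] at hy ⊢
  intro p hp
  rw [hy p (hp.trans_le h.length_le), List.getD_agree' h hp]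

lemma baire_getD {w : List ℕ} {y : ℕ → ℕ} (hy : y ∈ baire w) {p : ℕ} (hp : p < w.length) :
    y p = w.getD p 0 := by
  rw [baire_eq_cyl] at hy; exact hy p hp

lemma open_cyl_exists {α γ : Type*} [TopologicalSpace α] [DiscreteTopology α]
    [TopologicalSpace γ] [DiscreteTopology γ] {O : Set ((ℕ → α) × (ℕ → γ))}
    (hO : IsOpen O) {x : ℕ → α} {y : ℕ → γ} (hxy : (x, y) ∈ O) :
    ∃ N M : ℕ, ∀ x' y', (∀ p < N, x' p = x p) → (∀ p < M, y' p = y p) → (x', y') ∈ O := by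
  have hmem : O ∈ nhds (x, y) := hO.mem_nhds hxy
  rw [nhds_prod_eq, Filter.mem_prod_iff] at hmem
  obtain ⟨U, hU, V, hV, hUV⟩ := hmem
  rw [nhds_pi, Filter.mem_pi] at hU hV
  obtain ⟨I, hIfin, t, ht, hsub⟩ := hU
  obtain ⟨J, hJfin, q, hq, hsub'⟩ := hV
  obtain ⟨N0, hN0⟩ := hIfin.bddAbove
  obtain ⟨M0, hM0⟩ := hJfin.bddAbove
  refine ⟨N0 + 1, M0 + 1, fun x' y' hx' hy' => ?_⟩
  apply hUV
  constructor
  · apply hsub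
    intro p hp
    show x' p ∈ t p
    rw [hx' p (by have := hN0 hp; omega)]
    have := ht p
    rwa [nhds_discrete, Filter.mem_pure] at this
  · apply hsub'
    intro p hp
    show y' p ∈ q p
    rw [hy' p (by have := hM0 hp; omega)]
    have := hq p
    rwa [nhds_discrete, Filter.mem_pure] at this


-- part 6 : the recursion and the main theorem
lemma rec_step (T : Set (List Bool)) (u : ℕ → List Bool) (hT : IsSilver T u) (k : ℕ)
    (Z : Set ((ℕ → Bool) × (ℕ → ℕ)))
    (hZsub : Z ⊆ branches T ×ˢ (Set.univ : Set (ℕ → ℕ)))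
    (O : Set ((ℕ → Bool) × (ℕ → ℕ))) (hO : IsOpen O)
    (hZO : Z = O ∩ (branches T ×ˢ Set.univ))
    (hZdense : branches T ×ˢ (Set.univ : Set (ℕ → ℕ)) ⊆ closure Z)
    (L : List (Fin (k+1) → Bool)) :
    ∀ (r0 : ℕ) (b0 : ℕ → Bool) (w0 : List ℕ),
      ∃ (r1 : ℕ) (b1 : ℕ → Bool) (w1 : List ℕ),
        r0 ≤ r1 ∧ (∀ m ≤ k + r0, b1 m = b0 m) ∧ w0 <+: w1 ∧
        ∀ β ∈ L, ∀ (x' : ℕ → Bool) (y' : ℕ → ℕ), x' ∈ branches T →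
          (∀ p < oi u (k + r1) + 1,
            x' p = (silverWord u (mixf k β b1) (k + r1)).getD p false) →
          y' ∈ baire w1 → (x', y') ∈ Z := by
  induction L with
  | nil =>
      intro r0 b0 w0
      exact ⟨r0, b0, w0, le_rfl, fun _ _ => rfl, List.prefix_refl _, by simp⟩
  | cons β L ih =>
    intro r0 b0 w0
    set g := mixf k β b0 with hg
    set x := canBranch u g with hxdef
    have hx : x ∈ branches T := canBranch_mem hT g
    set y := fun p => w0.getD p 0 with hydef
    have hy : y ∈ baire w0 := mem_baire_self w0
    set N0 := oi u (k + r0) + 1 with hN0def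
    have hcl : (x, y) ∈ closure Z := hZdense (Set.mem_prod.mpr ⟨hx, trivial⟩)
    have hopen : IsOpen ({x' : ℕ → Bool | ∀ p < N0, x' p = x p} ×ˢ baire w0) :=
      (isOpen_cyl x N0).prod (isOpen_baire w0)
    obtain ⟨⟨x1, y1⟩, hxy1mem, hxy1Z⟩ := mem_closure_iff.mp hcl _ hopen
      (Set.mem_prod.mpr ⟨fun p _ => rfl, hy⟩)
    have hx1cyl : ∀ p < N0, x1 p = x p := hxy1mem.1
    have hy1 : y1 ∈ baire w0 := hxy1mem.2
    have hx1T : x1 ∈ branches T := (hZsub hxy1Z).1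
    have hx1O : (x1, y1) ∈ O := by rw [hZO] at hxy1Z; exact hxy1Z.1
    obtain ⟨N, M, hNM⟩ := open_cyl_exists hO hx1O
    set r0' := max r0 (N + N0) with hr0'def
    have hr0r0' : r0 ≤ r0' := le_max_left _ _
    have hNle : N ≤ oi u (k + r0') + 1 := by
      have h1 := le_oi u (k + r0')
      have h2 : N + N0 ≤ r0' := le_max_right _ _
      omega
    set b0' : ℕ → Bool := fun m => if m ≤ k + r0 then b0 m else x1 (oi u m) with hb0'def
    -- x1 agrees with the (k+r0')-word of (β, b0')
    have hoi_lt : ∀ m ≤ k + r0, oi u m < N0 := by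
      intro m hm
      have := oi_mono u hm; omega
    have hx_oi : ∀ m ≤ k + r0, x (oi u m) = g m := by
      intro m hm
      rw [hxdef]
      rw [canBranch_eq u g (oi_mono u hm), silverWord_getD_oi u g hm]
    have hmix : ∀ m ≤ k + r0', mixf k β b0' m = x1 (oi u m) := by
      intro m hm
      by_cases h1 : m ≤ k
      · have hm0 : m ≤ k + r0 := by omega
        rw [hx1cyl (oi u m) (hoi_lt m hm0), hx_oi m hm0, hg]
        simp only [mixf]
        rw [dif_pos (by omega), dif_pos (by omega)]
      · by_cases h2 : m ≤ k + r0
        · rw [hx1cyl (oi u m) (hoi_lt m h2), hx_oi m h2, hg]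
          simp only [mixf]
          rw [dif_neg (by omega), dif_neg (by omega)]
          show (if m ≤ k + r0 then b0 m else x1 (oi u m)) = b0 m
          rw [if_pos h2]
        · simp only [mixf]
          rw [dif_neg (by omega)]
          show (if m ≤ k + r0 then b0 m else x1 (oi u m)) = x1 (oi u m)
          rw [if_neg h2]
    have hx1word : ∀ p < oi u (k + r0') + 1,
        x1 p = (silverWord u (mixf k β b0') (k + r0')).getD p false := by
      intro p hp
      rw [branch_getD hT hx1T (n := k + r0') (by omega)]
      congr 1
      exact silverWord_congr (fun _ _ => rfl) (fun m hm => (hmix m hm).symm)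
    set w0' : List ℕ := List.ofFn (fun i : Fin (max M w0.length) => y1 i.1) with hw0'def
    have hw0'len : w0'.length = max M w0.length := by simp [hw0'def]
    have hw0'getE : ∀ p (hp : p < w0'.length), w0'[p] = y1 p := by
      intro p hp; simp [hw0'def]
    have hw0pref : w0 <+: w0' := by
      rw [List.prefix_iff_eq_take]
      apply List.ext_getElem
      · simp [hw0'len]
      · intro p h1 h2
        rw [List.getElem_take, hw0'getE p (by simp [hw0'len] at h2 ⊢; omega)]
        rw [← List.getD_eq_getElem _ 0 h1, ← baire_getD hy1 h1]
    obtain ⟨r1, b1, w1, hr1, hb1, hw1, hgL⟩ := ih r0' b0' w0'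
    refine ⟨r1, b1, w1, hr0r0'.trans hr1, ?_, hw0pref.trans hw1, ?_⟩
    · intro m hm
      rw [hb1 m (by omega), hb0'def]
      exact if_pos hm
    · intro β' hβ' x' y' hx'T hx'w hy'
      rcases List.mem_cons.mp hβ' with rfl | hmem
      · -- the new node β
        have hagree : ∀ m ≤ k + r0', mixf k β' b0' m = mixf k β' b1 m := by
          intro m hm
          by_cases h1 : m < k + 1
          · simp only [mixf]; rw [dif_pos h1, dif_pos h1]
          · simp only [mixf]; rw [dif_neg h1, dif_neg h1, hb1 m hm]
        have hpref : silverWord u (mixf k β' b0') (k + r0')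
            <+: silverWord u (mixf k β' b1) (k + r1) := by
          rw [silverWord_congr (fun _ _ => rfl) hagree]
          exact silverWord_prefix_mono u _ (by omega)
        have hlenshort : (silverWord u (mixf k β' b0') (k + r0')).length
            = oi u (k + r0') + 1 := silverWord_length _ _ _
        have hinO : (x', y') ∈ O := by
          apply hNM x' y'
          · intro p hp
            have hp' : p < oi u (k + r0') + 1 := by omega
            have hp'' : p < oi u (k + r1) + 1 := by
              have := oi_mono u (show k + r0' ≤ k + r1 by omega); omega
            rw [hx'w p hp'', ← List.getD_agree hpref (by omega) false, ← hx1word p hp']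
          · intro p hp
            have hy'0 : y' ∈ baire w0' := baire_anti hw1 hy'
            have hpw : p < w0'.length := by rw [hw0'len]; omega
            rw [baire_getD hy'0 hpw, List.getD_eq_getElem _ _ hpw, hw0'getE p hpw]
        rw [hZO]
        exact ⟨hinO, Set.mem_prod.mpr ⟨hx'T, trivial⟩⟩
      · exact hgL β' hmem x' y' hx'T hx'w hy'
  -- post-processing for membership in Z


/-- if `T` is a Silver tree, `k < ω`, `v ∈ ω^{<ω}`, and
`Z ⊆ [T] × ω^ω` is open and dense in the subspace `[T] × ω^ω`, then there are
`w ⊇ v` and a Silver tree `S ⊑_{k+1} T`, clopen in `T`, with `[S] × B_w ⊆ Z`. -/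
theorem stmt9 (T : Set (List Bool)) (hT : SilverTree T) (k : ℕ) (v : List ℕ)
    (Z : Set ((ℕ → Bool) × (ℕ → ℕ)))
    (hZsub : Z ⊆ branches T ×ˢ (univ : Set (ℕ → ℕ)))
    (hZopen : ∃ O : Set ((ℕ → Bool) × (ℕ → ℕ)),
      IsOpen O ∧ Z = O ∩ (branches T ×ˢ (univ : Set (ℕ → ℕ))))
    (hZdense : branches T ×ˢ (univ : Set (ℕ → ℕ)) ⊆ closure Z) :
    ∃ w : List ℕ, v <+: w ∧
      ∃ S : Set (List Bool), SilverTree S ∧ RefinesN S T (k + 1) ∧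
        ClopenIn S T ∧ branches S ×ˢ baire w ⊆ Z := by
  obtain ⟨u, hu⟩ := hT
  obtain ⟨O, hO, hZO⟩ := hZopen
  obtain ⟨r, b, w, -, -, hvw, hg⟩ := rec_step T u hu k Z hZsub O hO hZO hZdense
    (Finset.univ : Finset (Fin (k+1) → Bool)).toList 0 (fun _ => false) v
  set u' := condense u b k r with hu'def
  set S := { s | ∃ (n : ℕ) (i : ℕ → Bool), s <+: silverWord u' i n } with hSdef
  have hSsilver : IsSilver S u' := rfl
  have hSsub : S ⊆ T := condense_subset hu b k r
  refine ⟨w, hvw, S, ⟨u', hSsilver⟩, ⟨hSsub, ?_⟩, condense_clopen hu b k r, ?_⟩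
  · intro uS uT hS' hT' j hj
    have h1 : oi uS = oi u' := oi_unique hS' hSsilver
    have h2 : oi uT = oi u := oi_unique hT' hu
    rw [congrFun h1 j, congrFun h2 j, hu'def, oi_condense_le u b k r (by omega)]
  · rintro ⟨x', y'⟩ ⟨hx', hy'⟩
    exact hg (fun j : Fin (k+1) => x' (oi u j.1))
      (Finset.mem_toList.mpr (Finset.mem_univ _)) x' y'
      (branches_mono hSsub hx')
      (condense_branch_agree b k r hx') hy'
end
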